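/- arXiv:cs/0611121 — 2 statements merged into one kernel-verified Lean document; each statement's English description precedes it below -/
import Mathlib

section
/- Privacy amplification bound: if G is uniformly distributed over a universal₂ family of hash functions from {0,1}^n to {0,1}^k and S is a random variable on {0,1}^n with Rényi entropy of order 2 at least c, then H(G(S)|G) ≥ k − 2^{k−c}/ln 2. -/
open Finset

/-- Probability of the event `f = a` under a pmf `p` on a finite sample space. -/
def pmfProb {Ω α : Type*} [Fintype Ω] [DecidableEq α] (p : Ω → ℝ) (f : Ω → α) (a : α) : ℝ :=
  ∑ ω ∈ Finset.univ.filter (fun ω => f ω = a), p ω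

/-- Shannon entropy (in bits) of the random variable `f` under the pmf `p`. -/
noncomputable def pmfEntropy {Ω α : Type*} [Fintype Ω] [Fintype α] [DecidableEq α]
    (p : Ω → ℝ) (f : Ω → α) : ℝ :=
  -∑ a : α, pmfProb p f a * Real.logb 2 (pmfProb p f a)

/-- Jensen's inequality for `Real.log`. -/
lemma jensen_log {ι : Type*} (t : Finset ι) (w v : ι → ℝ)
    (hw : ∀ i ∈ t, 0 ≤ w i) (hw1 : ∑ i ∈ t, w i = 1) (hv : ∀ i ∈ t, 0 < v i) :
    ∑ i ∈ t, w i * Real.log (v i) ≤ Real.log (∑ i ∈ t, w i * v i) := by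
  simpa using strictConcaveOn_log_Ioi.concaveOn.le_map_sum hw hw1 (fun i hi => hv i hi)

/-- Same, for `Real.logb 2`. -/
lemma jensen_logb {ι : Type*} (t : Finset ι) (w v : ι → ℝ)
    (hw : ∀ i ∈ t, 0 ≤ w i) (hw1 : ∑ i ∈ t, w i = 1) (hv : ∀ i ∈ t, 0 < v i) :
    ∑ i ∈ t, w i * Real.logb 2 (v i) ≤ Real.logb 2 (∑ i ∈ t, w i * v i) := by
  have hlog2 : (0:ℝ) < Real.log 2 := Real.log_pos (by norm_num)
  have h := jensen_log t w v hw hw1 hv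
  rw [Real.logb, le_div_iff₀ hlog2, Finset.sum_mul]
  calc ∑ i ∈ t, w i * Real.logb 2 (v i) * Real.log 2
      = ∑ i ∈ t, w i * Real.log (v i) := by
        refine Finset.sum_congr rfl fun i _ => ?_
        rw [Real.logb]; field_simp
    _ ≤ Real.log (∑ i ∈ t, w i * v i) := h

/-- Shannon entropy is at least Rényi entropy of order 2. -/
lemma entropy_ge_renyi2 {α : Type*} [Fintype α] (P : α → ℝ)
    (hP : ∀ a, 0 ≤ P a) (hP1 : ∑ a, P a = 1) :
    -Real.logb 2 (∑ a, P a ^ 2) ≤ -∑ a : α, P a * Real.logb 2 (P a) := by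
  set t := Finset.univ.filter (fun a : α => 0 < P a) with ht
  have hsum_t : ∑ a ∈ t, P a = 1 := by
    rw [← hP1]
    exact Finset.sum_filter_of_ne fun a _ h => lt_of_le_of_ne (hP a) (Ne.symm h)
  have h1 : ∑ a : α, P a * Real.logb 2 (P a) = ∑ a ∈ t, P a * Real.logb 2 (P a) :=
    (Finset.sum_filter_of_ne fun a _ h => by
      rcases eq_or_lt_of_le (hP a) with h' | h'
      · exact (h (by rw [← h']; simp)).elim
      · exact h').symm
  have h2 : ∑ a : α, P a ^ 2 = ∑ a ∈ t, P a ^ 2 :=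
    (Finset.sum_filter_of_ne fun a _ h => by
      rcases eq_or_lt_of_le (hP a) with h' | h'
      · exact (h (by rw [← h']; simp)).elim
      · exact h').symm
  rw [h1, h2, neg_le_neg_iff]
  have h := jensen_logb t P P (fun i _ => hP i) hsum_t
    (fun i hi => (Finset.mem_filter.mp hi).2)
  simpa [sq] using h

/-- Collision probability identity. -/
lemma collision_eq {Ω α : Type*} [Fintype Ω] [Fintype α] [DecidableEq α]
    (q : Ω → ℝ) (f : Ω → α) :
    ∑ a : α, pmfProb q f a ^ 2 =
      ∑ s : Ω, ∑ t : Ω, (if f s = f t then q s * q t else 0) := by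
  have h : ∀ a, pmfProb q f a ^ 2
      = ∑ s : Ω, ∑ t : Ω, ((if f s = a then q s else 0) * (if f t = a then q t else 0)) := by
    intro a
    rw [pmfProb, Finset.sum_filter, sq, Finset.sum_mul_sum]
  rw [Finset.sum_congr rfl fun a _ => h a, Finset.sum_comm]
  refine Finset.sum_congr rfl fun s _ => ?_
  rw [Finset.sum_comm]
  refine Finset.sum_congr rfl fun t _ => ?_
  have key : ∀ a : α, (if f s = a then q s else 0) * (if f t = a then q t else 0)
      = if f s = a then (if f s = f t then q s * q t else 0) else 0 := by
    intro a
    by_cases h1 : f s = a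
    · rw [if_pos h1]
      by_cases h2 : f s = f t
      · rw [if_pos (h2.symm.trans h1), if_pos h2, if_pos h1]
      · rw [if_neg (fun h : f t = a => h2 (h1.trans h.symm)), if_neg h2, mul_zero, if_pos h1]
    · rw [if_neg h1, zero_mul, if_neg h1]
  rw [Finset.sum_congr rfl fun a _ => key a, Finset.sum_ite_eq Finset.univ (f s)]
  simp

/-- Privacy amplification bound (Bennett–Brassard–Crépeau–Maurer): if `G` is uniformly
distributed over a universal₂ family of hash functions from `{0,1}^n` to `{0,1}^k`
(indexed by `Fin F`), independent of `S`, and `S` has order-2 Rényi entropy at least `c`,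
then `H(G(S)|G) = (1/F)·Σ_i H(g_i(S)) ≥ k − 2^{k−c}/ln 2`. -/
theorem privacy_amplification
    (n k F : ℕ) (hF : 0 < F)
    (g : Fin F → (Fin n → Bool) → (Fin k → Bool))
    (huniv : ∀ x y : Fin n → Bool, x ≠ y →
      ((Finset.univ.filter (fun i : Fin F => g i x = g i y)).card : ℝ) / F ≤
        (2 : ℝ) ^ (-(k : ℝ)))
    (q : (Fin n → Bool) → ℝ) (hq : ∀ s, 0 ≤ q s) (hsum : ∑ s, q s = 1)
    (c : ℝ) (hRenyi : -Real.logb 2 (∑ s, q s ^ 2) ≥ c) :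
    (1 / (F : ℝ)) * ∑ i : Fin F, pmfEntropy q (g i) ≥
      (k : ℝ) - (2 : ℝ) ^ ((k : ℝ) - c) / Real.log 2 := by
  have hF' : (0:ℝ) < F := by exact_mod_cast hF
  have hlog2 : (0:ℝ) < Real.log 2 := Real.log_pos (by norm_num)
  have hPnn : ∀ i a, 0 ≤ pmfProb q (g i) a := fun i a =>
    Finset.sum_nonneg (fun s _ => hq s)
  have hPsum : ∀ i, ∑ a, pmfProb q (g i) a = 1 := fun i => by
    rw [← hsum]; exact Finset.sum_fiberwise _ _ _
  set P : Fin F → ℝ := fun i => ∑ a, pmfProb q (g i) a ^ 2 with hP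
  have hPpos : ∀ i, 0 < P i := by
    intro i
    obtain ⟨a, _, ha⟩ := Finset.exists_ne_zero_of_sum_ne_zero
      (by rw [hPsum i]; norm_num : ∑ a, pmfProb q (g i) a ≠ 0)
    have h0 : 0 < pmfProb q (g i) a ^ 2 :=
      pow_pos (lt_of_le_of_ne (hPnn i a) (Ne.symm ha)) 2
    exact lt_of_lt_of_le h0
      (Finset.single_le_sum (f := fun a => pmfProb q (g i) a ^ 2)
        (fun b _ => sq_nonneg _) (Finset.mem_univ a))
  set Q : ℝ := ∑ s, q s ^ 2 with hQdef
  have hQpos : 0 < Q := by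
    obtain ⟨s, _, hs⟩ := Finset.exists_ne_zero_of_sum_ne_zero
      (by rw [hsum]; norm_num : ∑ s, q s ≠ 0)
    have h0 : 0 < q s ^ 2 := pow_pos (lt_of_le_of_ne (hq s) (Ne.symm hs)) 2
    exact lt_of_lt_of_le h0
      (Finset.single_le_sum (f := fun s => q s ^ 2)
        (fun b _ => sq_nonneg _) (Finset.mem_univ s))
  have hQle : Q ≤ (2:ℝ) ^ (-c) := by
    have h1 : Real.logb 2 Q ≤ -c := by linarith [hRenyi]
    calc Q = (2:ℝ) ^ (Real.logb 2 Q) :=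
          (Real.rpow_logb (by norm_num) (by norm_num) hQpos).symm
      _ ≤ (2:ℝ) ^ (-c) := Real.rpow_le_rpow_of_exponent_le (by norm_num) h1
  have hr1 : ∀ s t : Fin n → Bool,
      ((Finset.univ.filter (fun i : Fin F => g i s = g i t)).card : ℝ) / F ≤ 1 := by
    intro s t
    rw [div_le_one hF']
    have := Finset.card_filter_le Finset.univ (fun i : Fin F => g i s = g i t)
    simp only [Finset.card_univ, Fintype.card_fin] at this
    exact_mod_cast this
  -- average collision probability bound
  have havg : (1 / (F:ℝ)) * ∑ i, P i ≤ (2:ℝ) ^ (-(k:ℝ)) + (2:ℝ) ^ (-c) := by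
    have swap : ∑ i : Fin F, ∑ s, ∑ t, (if g i s = g i t then q s * q t else 0)
        = ∑ s, ∑ t, ∑ i : Fin F, (if g i s = g i t then q s * q t else 0) := by
      rw [Finset.sum_comm]
      exact Finset.sum_congr rfl fun s _ => Finset.sum_comm
    have inner : ∀ s t : Fin n → Bool,
        ∑ i : Fin F, (if g i s = g i t then q s * q t else 0)
        = ((Finset.univ.filter (fun i : Fin F => g i s = g i t)).card : ℝ) * (q s * q t) := by
      intro s t
      rw [← Finset.sum_filter, Finset.sum_const, nsmul_eq_mul]
    have key : (1 / (F:ℝ)) * ∑ i, P i =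
        ∑ s, ∑ t, (q s * q t) *
          (((Finset.univ.filter (fun i : Fin F => g i s = g i t)).card : ℝ) / F) := by
      have hPi : ∑ i : Fin F, P i
          = ∑ s, ∑ t, ((Finset.univ.filter (fun i : Fin F => g i s = g i t)).card : ℝ)
              * (q s * q t) := by
        calc ∑ i : Fin F, P i
            = ∑ i : Fin F, ∑ s, ∑ t, (if g i s = g i t then q s * q t else 0) :=
              Finset.sum_congr rfl fun i _ => collision_eq q (g i)
          _ = ∑ s, ∑ t, ∑ i : Fin F, (if g i s = g i t then q s * q t else 0) := swap
          _ = _ := Finset.sum_congr rfl fun s _ =>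
              Finset.sum_congr rfl fun t _ => inner s t
      rw [hPi, Finset.mul_sum]
      refine Finset.sum_congr rfl fun s _ => ?_
      rw [Finset.mul_sum]
      refine Finset.sum_congr rfl fun t _ => ?_
      field_simp
    rw [key]
    have hbound : ∀ s t : Fin n → Bool, (q s * q t) *
        (((Finset.univ.filter (fun i : Fin F => g i s = g i t)).card : ℝ) / F) ≤
        (if s = t then q s * q t else 0) + (2:ℝ) ^ (-(k:ℝ)) * (q s * q t) := by
      intro s t
      have hqq : 0 ≤ q s * q t := mul_nonneg (hq s) (hq t)
      by_cases hst : s = t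
      · simp only [if_pos hst]
        have h2 := hr1 s t
        nlinarith [Real.rpow_nonneg (by norm_num : (0:ℝ) ≤ 2) (-(k:ℝ))]
      · simp only [if_neg hst]
        have h2 := huniv s t hst
        nlinarith
    calc ∑ s, ∑ t, (q s * q t) *
          (((Finset.univ.filter (fun i : Fin F => g i s = g i t)).card : ℝ) / F)
        ≤ ∑ s, ∑ t, ((if s = t then q s * q t else 0) + (2:ℝ) ^ (-(k:ℝ)) * (q s * q t)) :=
          Finset.sum_le_sum fun s _ => Finset.sum_le_sum fun t _ => hbound s t
      _ = Q + (2:ℝ) ^ (-(k:ℝ)) := by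
          simp only [Finset.sum_add_distrib]
          congr 1
          · rw [hQdef]
            refine Finset.sum_congr rfl fun s _ => ?_
            rw [Finset.sum_ite_eq Finset.univ s (fun t => q s * q t)]
            simp [sq]
          · have e : ∑ s : Fin n → Bool, ∑ t : Fin n → Bool, (2:ℝ) ^ (-(k:ℝ)) * (q s * q t)
                = (2:ℝ) ^ (-(k:ℝ)) * ((∑ s, q s) * (∑ t, q t)) := by
              rw [Finset.sum_mul_sum, Finset.mul_sum]
              refine Finset.sum_congr rfl fun s _ => ?_
              rw [Finset.mul_sum]
            rw [e, hsum, mul_one, mul_one]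
      _ ≤ (2:ℝ) ^ (-(k:ℝ)) + (2:ℝ) ^ (-c) := by linarith
  -- entropy lower bounds
  have step1 : (1 / (F:ℝ)) * ∑ i : Fin F, pmfEntropy q (g i) ≥
      (1 / (F:ℝ)) * ∑ i : Fin F, (-Real.logb 2 (P i)) := by
    apply mul_le_mul_of_nonneg_left _ (by positivity)
    exact Finset.sum_le_sum fun i _ => entropy_ge_renyi2 _ (hPnn i) (hPsum i)
  have step2 : (1 / (F:ℝ)) * ∑ i : Fin F, (-Real.logb 2 (P i)) ≥
      -Real.logb 2 ((1 / (F:ℝ)) * ∑ i, P i) := by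
    have hj := jensen_logb Finset.univ (fun _ : Fin F => 1 / (F:ℝ)) P
      (fun i _ => by positivity)
      (by rw [Finset.sum_const, Finset.card_univ, Fintype.card_fin, nsmul_eq_mul]
          field_simp)
      (fun i _ => hPpos i)
    rw [ge_iff_le, neg_le]
    have e1 : -((1/(F:ℝ)) * ∑ i : Fin F, -Real.logb 2 (P i))
        = ∑ i : Fin F, (1/(F:ℝ)) * Real.logb 2 (P i) := by
      rw [Finset.mul_sum]
      simp [mul_neg]
    rw [e1]
    refine hj.trans_eq ?_
    rw [← Finset.mul_sum]
  have step3 : -Real.logb 2 ((1 / (F:ℝ)) * ∑ i, P i) ≥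
      -Real.logb 2 ((2:ℝ) ^ (-(k:ℝ)) + (2:ℝ) ^ (-c)) := by
    rw [ge_iff_le, neg_le_neg_iff]
    have hpos : 0 < (1 / (F:ℝ)) * ∑ i, P i := by
      apply mul_pos (by positivity)
      exact Finset.sum_pos (fun i _ => hPpos i) ⟨⟨0, hF⟩, Finset.mem_univ _⟩
    exact Real.logb_le_logb_of_le (by norm_num) hpos havg
  have step4 : -Real.logb 2 ((2:ℝ) ^ (-(k:ℝ)) + (2:ℝ) ^ (-c)) ≥
      (k : ℝ) - (2:ℝ) ^ ((k:ℝ) - c) / Real.log 2 := by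
    have hsplit : (2:ℝ) ^ (-(k:ℝ)) + (2:ℝ) ^ (-c)
        = (2:ℝ) ^ (-(k:ℝ)) * (1 + (2:ℝ) ^ ((k:ℝ) - c)) := by
      rw [mul_add, mul_one, ← Real.rpow_add (by norm_num)]
      ring_nf
    rw [hsplit, Real.logb, Real.log_mul (by positivity) (by positivity),
      Real.log_rpow (by norm_num)]
    have hx : (0:ℝ) < 1 + (2:ℝ) ^ ((k:ℝ) - c) := by positivity
    have hlog_le : Real.log (1 + (2:ℝ) ^ ((k:ℝ) - c)) ≤ (2:ℝ) ^ ((k:ℝ) - c) := by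
      have := Real.log_le_sub_one_of_pos hx
      linarith
    have e2 : -((-(k:ℝ) * Real.log 2 + Real.log (1 + (2:ℝ) ^ ((k:ℝ) - c))) / Real.log 2)
        = (k:ℝ) - Real.log (1 + (2:ℝ) ^ ((k:ℝ) - c)) / Real.log 2 := by
      field_simp
      ring
    rw [ge_iff_le, e2]
    have hdiv : Real.log (1 + (2:ℝ) ^ ((k:ℝ) - c)) / Real.log 2
        ≤ (2:ℝ) ^ ((k:ℝ) - c) / Real.log 2 := by gcongr
    linarith
  linarith [step1, step2, step3, step4]
end

section
/- Rényi entropy and side information: if S is a discrete random variable and M a random variable taking at most |M| values, then for any s > 0, with probability at least 1 − 2^{−s} over (the realization m of) M, R(S | M = m) ≥ R(S) − log₂|M| − 2s − 2, where R is order-2 Rényi entropy. -/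
open Finset

/-- Rényi entropy and side information (Cachin): if `S` (over finite `α`, with joint pmf
`p` on `α × β`) and `M` (over finite `β`, of cardinality `|M|`) are jointly distributed,
then for any `s > 0`, with probability at least `1 − 2^{−s}` over the realization `m` of
`M`, `R(S | M = m) ≥ R(S) − log₂|M| − 2s − 2`, where `R` is order-2 Rényi entropy. -/
theorem renyi_side_information
    {α β : Type*} [Fintype α] [Fintype β]
    (p : α × β → ℝ) (hp : ∀ z, 0 ≤ p z) (hsum : ∑ z, p z = 1)
    (pM : β → ℝ) (hpM : ∀ m, pM m = ∑ a, p (a, m))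
    (RS : ℝ) (hRS : RS = -Real.logb 2 (∑ a, (∑ m, p (a, m)) ^ 2))
    (condR : β → ℝ)
    (hcondR : ∀ m, condR m = -Real.logb 2 (∑ a, (p (a, m) / pM m) ^ 2))
    (s : ℝ) (hs : 0 < s) :
    ∑ m ∈ Finset.univ.filter
        (fun m => condR m < RS - Real.logb 2 (Fintype.card β) - 2 * s - 2),
      pM m ≤ (2 : ℝ) ^ (-s) := by
  classical
  set P : ℝ := ∑ a, (∑ m, p (a, m)) ^ 2 with hPdef
  set c : β → ℝ := fun m => ∑ a, p (a, m) ^ 2 with hcdef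
  set T : ℝ := ∑ m, c m with hTdef
  have hpM0 : ∀ m, 0 ≤ pM m := fun m => by
    rw [hpM]; exact Finset.sum_nonneg fun a _ => hp _
  have hc0 : ∀ m, 0 ≤ c m := fun m => Finset.sum_nonneg fun a _ => sq_nonneg _
  obtain ⟨z0, hz0⟩ : ∃ z, 0 < p z := by
    by_contra h
    push_neg at h
    have hz : ∀ z, p z = 0 := fun z => le_antisymm (h z) (hp z)
    simp [hz] at hsum
  have hβ : Nonempty β := ⟨z0.2⟩
  have hcardβ : (1:ℝ) ≤ (Fintype.card β : ℝ) := by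
    exact_mod_cast Fintype.card_pos
  have hcardβ0 : (0:ℝ) < (Fintype.card β : ℝ) := lt_of_lt_of_le one_pos hcardβ
  have hTz : T = ∑ z : α × β, p z ^ 2 := by
    rw [hTdef, Fintype.sum_prod_type_right]
  have hTpos : (0:ℝ) < T := by
    rw [hTz]
    exact Finset.sum_pos' (fun z _ => sq_nonneg _)
      ⟨z0, Finset.mem_univ _, by positivity⟩
  have hTP : T ≤ P := by
    rw [hTdef, hPdef]
    rw [Finset.sum_comm]
    exact Finset.sum_le_sum fun a _ =>
      Finset.sum_sq_le_sq_sum_of_nonneg fun m _ => hp _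
  have hPpos : (0:ℝ) < P := lt_of_lt_of_le hTpos hTP
  set ε : ℝ := (2:ℝ) ^ (-(s+1)) with hεdef
  have hεpos : 0 < ε := Real.rpow_pos_of_pos two_pos _
  set K : ℝ := (2:ℝ) ^ (s+1) * T with hKdef
  have hKpos : 0 < K := mul_pos (Real.rpow_pos_of_pos two_pos _) hTpos
  set E1 : Finset β := Finset.univ.filter
    (fun m => pM m ≤ ε / (Fintype.card β : ℝ)) with hE1def
  set E2 : Finset β := Finset.univ.filter (fun m => pM m * K ≤ c m) with hE2def
  set Bad : Finset β := Finset.univ.filter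
    (fun m => condR m < RS - Real.logb 2 (Fintype.card β) - 2 * s - 2) with hBaddef
  -- Inclusion
  have hsub : Bad ⊆ E1 ∪ E2 := by
    intro m hm
    rw [hBaddef, Finset.mem_filter] at hm
    by_contra hmem
    rw [Finset.mem_union, hE1def, hE2def, Finset.mem_filter, Finset.mem_filter] at hmem
    push_neg at hmem
    have h1 : ε / (Fintype.card β : ℝ) < pM m := hmem.1 (Finset.mem_univ m)
    have h2 : c m < pM m * K := hmem.2 (Finset.mem_univ m)
    have hpMpos : 0 < pM m := lt_trans (by positivity) h1
    -- conditional collision probability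
    have hCform : (∑ a, (p (a, m) / pM m) ^ 2) = c m / pM m ^ 2 := by
      rw [hcdef]
      simp only [div_pow]
      rw [← Finset.sum_div]
    have hcmpos : 0 < c m := by
      obtain ⟨a0, ha0⟩ : ∃ a, 0 < p (a, m) := by
        by_contra h
        push_neg at h
        have hz : ∀ a, p (a, m) = 0 := fun a => le_antisymm (h a) (hp _)
        rw [hpM m] at hpMpos
        simp [hz] at hpMpos
      exact Finset.sum_pos' (fun a _ => sq_nonneg _)
        ⟨a0, Finset.mem_univ _, by positivity⟩
    set C : ℝ := c m / pM m ^ 2 with hCdef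
    have hCpos : 0 < C := by positivity
    set D : ℝ := (2:ℝ) ^ (2*s+2) * ((Fintype.card β : ℝ) * P) with hDdef
    have hDpos : 0 < D := by positivity
    -- C < D
    have hCD : C < D := by
      have hstep1 : C < K / pM m := by
        rw [hCdef, div_lt_iff₀ (pow_pos hpMpos 2)]
        have heq : K / pM m * pM m ^ 2 = K * pM m := by
          rw [pow_two, ← mul_assoc, div_mul_cancel₀ _ (ne_of_gt hpMpos)]
        rw [heq]
        linarith [h2]
      have h2pow : (2:ℝ) ^ (2*s+2) * (2:ℝ) ^ (-(s+1)) = (2:ℝ)^(s+1) := by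
        rw [← Real.rpow_add two_pos]; congr 1; ring
      have hDε : D * (ε / (Fintype.card β : ℝ)) = (2:ℝ)^(s+1) * P := by
        rw [hDdef, hεdef, ← h2pow]
        field_simp [ne_of_gt hcardβ0]
      have hstep2 : K / pM m < D := by
        rw [div_lt_iff₀ hpMpos]
        calc K ≤ (2:ℝ)^(s+1) * P := mul_le_mul_of_nonneg_left hTP (by positivity)
          _ = D * (ε / (Fintype.card β : ℝ)) := hDε.symm
          _ < D * pM m := mul_lt_mul_of_pos_left h1 hDpos
      exact lt_trans hstep1 hstep2
    -- logs
    have hlog : Real.logb 2 C < Real.logb 2 D :=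
      Real.logb_lt_logb one_lt_two hCpos hCD
    have hlogD : Real.logb 2 D = (2*s+2) + (Real.logb 2 (Fintype.card β) - RS) := by
      rw [hDdef, Real.logb_mul (by positivity) (by positivity),
        Real.logb_mul (by positivity) (by positivity),
        Real.logb_rpow two_pos (by norm_num), hRS, hPdef]
      ring
    have hcondRm : condR m = -Real.logb 2 C := by
      rw [hcondR m, hCform, hCdef]
    have := hm.2
    rw [hcondRm] at this
    rw [hlogD] at hlog
    linarith
  -- sum bounds
  have hE1sum : ∑ m ∈ E1, pM m ≤ ε := by
    have h := Finset.sum_le_card_nsmul E1 pM (ε / (Fintype.card β : ℝ))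
      (fun m hm => by
        rw [hE1def, Finset.mem_filter] at hm; exact hm.2)
    rw [nsmul_eq_mul] at h
    have hcard : (E1.card : ℝ) ≤ (Fintype.card β : ℝ) := by
      exact_mod_cast Finset.card_le_card (Finset.subset_univ E1)
    calc ∑ m ∈ E1, pM m ≤ (E1.card : ℝ) * (ε / (Fintype.card β : ℝ)) := h
      _ ≤ (Fintype.card β : ℝ) * (ε / (Fintype.card β : ℝ)) := by
          apply mul_le_mul_of_nonneg_right hcard (by positivity)
      _ = ε := by field_simp
  have hE2sum : ∑ m ∈ E2, pM m ≤ ε := by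
    have hle : (∑ m ∈ E2, pM m) * K ≤ T := by
      rw [Finset.sum_mul]
      calc ∑ m ∈ E2, pM m * K ≤ ∑ m ∈ E2, c m := by
            apply Finset.sum_le_sum
            intro m hm
            rw [hE2def, Finset.mem_filter] at hm
            exact hm.2
        _ ≤ T := Finset.sum_le_sum_of_subset_of_nonneg (Finset.subset_univ E2)
            (fun m _ _ => hc0 m)
    have hTK : T / K = ε := by
      rw [hKdef, hεdef, Real.rpow_neg (by norm_num : (0:ℝ) ≤ 2), mul_comm,
        div_mul_eq_div_div, div_self (ne_of_gt hTpos), one_div]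
    rw [← hTK, le_div_iff₀ hKpos]
    exact hle
  have hunion : ∑ m ∈ E1 ∪ E2, pM m ≤ ∑ m ∈ E1, pM m + ∑ m ∈ E2, pM m := by
    have h := Finset.sum_union_inter (s₁ := E1) (s₂ := E2) (f := pM)
    have hinter : 0 ≤ ∑ m ∈ E1 ∩ E2, pM m := Finset.sum_nonneg fun m _ => hpM0 m
    linarith
  have hfinal : (2:ℝ) ^ (-s) = ε + ε := by
    have hε2 : ε = (2:ℝ)^(-s) * (2:ℝ)^(-(1:ℝ)) := by
      rw [hεdef, ← Real.rpow_add two_pos]; congr 1; ring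
    rw [hε2, Real.rpow_neg_one]
    ring
  calc ∑ m ∈ Bad, pM m ≤ ∑ m ∈ E1 ∪ E2, pM m :=
        Finset.sum_le_sum_of_subset_of_nonneg hsub (fun m _ _ => hpM0 m)
    _ ≤ ∑ m ∈ E1, pM m + ∑ m ∈ E2, pM m := hunion
    _ ≤ ε + ε := add_le_add hE1sum hE2sum
    _ = (2:ℝ) ^ (-s) := hfinal.symm
end
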